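/- Let 𝒮 be a separated scheme of finite type over ℤ and let n, d, r be positive integers. There exist a constant m, depending only on n, d, r (and 𝒮), and points s₁, …, s_m ∈ 𝒮 such that: (1) the residue fields κ(s₁), …, κ(s_m) are finite of characteristic prime to n; (2) if k is a number field of degree at most d, U ⊂ Spec O_k is an open subscheme with at most r places at infinity, and U → 𝒮 is a U-point of 𝒮, then there exist indices 1 ≤ i < j ≤ m such that the residue characteristics of κ(s_i) and κ(s_j) are distinct and the fibers of U → 𝒮 above s_i and above s_j are nonempty. -/

import Mathlib

/-!
STATEMENT 5 (Lemme 2.6). Let `𝒮` be a separated scheme of finite type over `ℤ`, and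
`n, d, r > 0` integers.  There exist `m` (depending only on `n, d, r` and `𝒮`) and points
`s₁, …, s_m ∈ 𝒮` such that (1) the residue fields `κ(sᵢ)` are finite of characteristic
prime to `n`, and (2) for every number field `k` of degree at most `d`, every open
`U ⊆ Spec O_k` with at most `r` places at infinity and every `U`-point `u : U → 𝒮`, there
are indices `i < j` such that the residue characteristics of `κ(sᵢ)` and `κ(sⱼ)` differ
and the fibres of `u` above `sᵢ` and `sⱼ` are nonempty.
-/

open AlgebraicGeometry CategoryTheory Limits

noncomputable section

section RingLevel

open IsLocalRing

variable {R : Type} [CommRing R]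

/-- The canonical map from `R` to the residue field of the localization at `p`. -/
def resMap (p : PrimeSpectrum R) :
    R →+* ResidueField (Localization.AtPrime p.asIdeal) :=
  (residue _).comp (algebraMap R _)

lemma ker_resMap (p : PrimeSpectrum R) : RingHom.ker (resMap p) = p.asIdeal := by
  ext x
  rw [RingHom.mem_ker, resMap, RingHom.comp_apply, residue_eq_zero_iff]
  exact IsLocalization.AtPrime.to_map_mem_maximal_iff _ p.asIdeal x

lemma resMap_surjective (p : PrimeSpectrum R)
    (hp : p.asIdeal.IsMaximal) : Function.Surjective (resMap p) := by
  intro z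
  obtain ⟨w, rfl⟩ := residue_surjective z
  obtain ⟨⟨x, s⟩, rfl⟩ := IsLocalization.mk'_surjective p.asIdeal.primeCompl w
  obtain ⟨t, i, hi, hti⟩ := hp.exists_inv s.2
  refine ⟨x * t, ?_⟩
  have h1 : (resMap p) (s * t) = 1 := by
    have : (s : R) * t = 1 - i := by linear_combination hti
    simp only [resMap, RingHom.comp_apply, this, map_sub, map_one]
    have : residue (Localization.AtPrime p.asIdeal) (algebraMap R _ i) = 0 := by
      rw [residue_eq_zero_iff]
      exact (IsLocalization.AtPrime.to_map_mem_maximal_iff _ p.asIdeal i).mpr hi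
    rw [this, sub_zero]
  have h2 : residue _ (IsLocalization.mk' (Localization.AtPrime p.asIdeal) x s)
      * (resMap p) (s : R) = (resMap p) x := by
    simp only [resMap, RingHom.comp_apply, ← map_mul]
    congr 1
    rw [mul_comm]
    exact IsLocalization.mk'_spec' _ x s
  calc (resMap p) (x * t) = residue _ (IsLocalization.mk' _ x s) * resMap p (s * t) := by
        rw [map_mul, ← h2, map_mul]; ring
    _ = _ := by rw [h1, mul_one]

lemma pow_card_eq_self {κ : Type*} [Field κ] [Finite κ] {ℓ d : ℕ} (hℓ : ℓ.Prime)
    (hchar : CharP κ ℓ) (hcard : Nat.card κ ≤ ℓ ^ d) (z : κ) :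
    z ^ (ℓ ^ (Nat.factorial d)) = z := by
  have : Fintype κ := Fintype.ofFinite κ
  obtain ⟨f, hfp, hf⟩ := FiniteField.card κ ℓ
  have hcard' : Fintype.card κ ≤ ℓ ^ d := by rwa [← Nat.card_eq_fintype_card]
  have hfd : (f : ℕ) ≤ d := by
    rw [hf] at hcard'
    exact (Nat.pow_le_pow_iff_right hℓ.one_lt).mp hcard'
  obtain ⟨c, hc⟩ := Nat.dvd_factorial f.pos hfd
  rw [hc, pow_mul, ← hf]
  exact FiniteField.pow_card_pow c z

/-- In a ring finitely generated over `ℤ`, the set of primes with small residue field of given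
characteristic is finite. -/
lemma finite_small_primes {A : Type} [CommRing A] (S : Finset A)
    (hS : Subring.closure (S : Set A) = ⊤) (ℓ d : ℕ) (hℓ : ℓ.Prime) :
    {p : PrimeSpectrum A | Finite (ResidueField (Localization.AtPrime p.asIdeal)) ∧
      ringChar (ResidueField (Localization.AtPrime p.asIdeal)) = ℓ ∧
      Nat.card (ResidueField (Localization.AtPrime p.asIdeal)) ≤ ℓ ^ d}.Finite := by
  haveI : Fact ℓ.Prime := ⟨hℓ⟩
  set q := ℓ ^ (Nat.factorial d) with hq
  set F := AlgebraicClosure (ZMod ℓ) with hF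
  -- the set of roots of X^q - X in F is finite
  have hroots : {z : F | z ^ q = z}.Finite := by
    have hne : (Polynomial.X ^ q - Polynomial.X : Polynomial F) ≠ 0 := by
      intro h
      have h1 : (Polynomial.X ^ q - Polynomial.X : Polynomial F).coeff q = 1 := by
        have hq1 : q ≠ 1 := by
          intro h'
          have := Nat.pos_of_ne_zero (Nat.factorial_ne_zero d)
          have h2 : 2 ≤ q := by
            calc 2 ≤ ℓ := hℓ.two_le
            _ = ℓ ^ 1 := (pow_one ℓ).symm
            _ ≤ q := Nat.pow_le_pow_right hℓ.pos (by omega)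
          omega
        simp [Polynomial.coeff_X, Ne.symm hq1]
      rw [h] at h1
      simp at h1
    have := Polynomial.finite_setOf_isRoot hne
    refine this.subset ?_
    intro z hz
    simp only [Set.mem_setOf_eq, Polynomial.IsRoot, Polynomial.eval_sub, Polynomial.eval_pow,
      Polynomial.eval_X]
    rw [hz.out]; ring
  -- construct, for each prime in the set, a ring hom to `F` with kernel `p`
  have key : ∀ p : PrimeSpectrum A,
      (Finite (IsLocalRing.ResidueField (Localization.AtPrime p.asIdeal)) ∧
        ringChar (IsLocalRing.ResidueField (Localization.AtPrime p.asIdeal)) = ℓ ∧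
        Nat.card (IsLocalRing.ResidueField (Localization.AtPrime p.asIdeal)) ≤ ℓ ^ d) →
      ∃ σ : A →+* F, RingHom.ker σ = p.asIdeal ∧ ∀ a, (σ a) ^ q = σ a := by
    intro p hp
    obtain ⟨h1, h2, h3⟩ := hp
    set κ := ResidueField (Localization.AtPrime p.asIdeal) with hκ
    haveI : Finite κ := h1
    haveI hch : CharP κ ℓ := h2 ▸ ringChar.charP κ
    letI : Algebra (ZMod ℓ) κ := ZMod.algebra κ ℓ
    haveI : NoZeroSMulDivisors (ZMod ℓ) κ :=
      inferInstance
    haveI : Module.Finite (ZMod ℓ) κ := Module.Finite.of_finite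
    haveI : Algebra.IsAlgebraic (ZMod ℓ) κ := Algebra.IsAlgebraic.of_finite (ZMod ℓ) κ
    let emb : κ →ₐ[ZMod ℓ] F := IsAlgClosed.lift
    refine ⟨(emb : κ →+* F).comp (resMap p), ?_, ?_⟩
    · ext a
      rw [RingHom.mem_ker, RingHom.comp_apply,
        map_eq_zero_iff (emb : κ →+* F) (emb : κ →+* F).injective,
        ← RingHom.mem_ker, ker_resMap]
    · intro a
      rw [RingHom.comp_apply, ← map_pow,
        pow_card_eq_self hℓ hch h3 (resMap p a)]
  -- now the set injects into functions from `S` to the roots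
  haveI : Finite {z : F // z ^ q = z} := hroots.to_subtype
  set P := {p : PrimeSpectrum A | Finite (ResidueField (Localization.AtPrime p.asIdeal)) ∧
      ringChar (ResidueField (Localization.AtPrime p.asIdeal)) = ℓ ∧
      Nat.card (ResidueField (Localization.AtPrime p.asIdeal)) ≤ ℓ ^ d} with hP
  have : Finite ↥P := by
    choose σ hker hpow using fun (p : ↥P) => key p.1 p.2
    have hg : Function.Injective (fun (p : ↥P) (a : ↥(S : Set A)) =>
        (⟨σ p a, hpow p a⟩ : {z : F // z ^ q = z})) := by
      intro p p' h
      have heq : Set.EqOn (σ p) (σ p') (S : Set A) := by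
        intro a ha
        have := congrArg (fun f => (f ⟨a, ha⟩ : {z : F // z ^ q = z}).1) h
        simpa using this
      have : σ p = σ p' := by
        ext a
        have ha : a ∈ Subring.closure (S : Set A) := hS ▸ Subring.mem_top a
        exact RingHom.eqOn_set_closure heq ha
      have hkk : (p : PrimeSpectrum A).asIdeal = (p' : PrimeSpectrum A).asIdeal := by
        rw [← hker p, ← hker p', this]
      exact Subtype.ext (PrimeSpectrum.ext hkk)
    exact Finite.of_injective _ hg
  exact P.toFinite

/-- Transfer of finiteness, characteristic and cardinality along a field embedding. -/
lemma field_transfer {K L : Type*} [Field K] [Field L] (f : K →+* L) {ℓ B : ℕ}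
    (h1 : Finite L) (h2 : ringChar L = ℓ) (h3 : Nat.card L ≤ B) :
    Finite K ∧ ringChar K = ℓ ∧ Nat.card K ≤ B := by
  haveI : Finite L := h1
  haveI : Finite K := Finite.of_injective f f.injective
  refine ⟨‹_›, ?_, le_trans (Nat.card_le_card_of_injective f f.injective) h3⟩
  have : CharP L (ringChar K) := charP_of_injective_ringHom f.injective _
  rw [← h2]
  exact (CharP.eq L this (ringChar.charP L))

end RingLevel

section NumberFieldLevel

open IsLocalRing NumberField

set_option maxHeartbeats 800000 in
set_option synthInstance.maxHeartbeats 400000 in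
lemma exists_prime_over (k : Type) [Field k] [NumberField k] {d : ℕ}
    (hdeg : Module.finrank ℚ k ≤ d) {ℓ : ℕ} (hℓ : ℓ.Prime) :
    ∃ p : PrimeSpectrum (𝓞 k), (ℓ : 𝓞 k) ∈ p.asIdeal ∧
      Finite (ResidueField (Localization.AtPrime p.asIdeal)) ∧
      ringChar (ResidueField (Localization.AtPrime p.asIdeal)) = ℓ ∧
      Nat.card (ResidueField (Localization.AtPrime p.asIdeal)) ≤ ℓ ^ d := by
  have hnd : Module.finrank ℤ (𝓞 k) ≤ d := by
    rw [NumberField.RingOfIntegers.rank]; exact hdeg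
  have hnpos : 0 < Module.finrank ℤ (𝓞 k) := by
    rw [NumberField.RingOfIntegers.rank]
    exact Module.finrank_pos
  have hcast : (ℓ : 𝓞 k) = algebraMap ℤ (𝓞 k) (ℓ : ℤ) := by simp
  have habs : Ideal.absNorm (Ideal.span {(ℓ : 𝓞 k)}) = ℓ ^ Module.finrank ℤ (𝓞 k) := by
    rw [Ideal.absNorm_span_singleton, hcast,
      Algebra.norm_algebraMap_of_basis (Module.Free.chooseBasis ℤ (𝓞 k)),
      Module.finrank_eq_card_chooseBasisIndex ℤ (𝓞 k)]
    simp [Int.natAbs_pow]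
  have hne : Ideal.span {(ℓ : 𝓞 k)} ≠ ⊤ := by
    intro h
    rw [h, Ideal.absNorm_top] at habs
    have : 2 ≤ ℓ ^ Module.finrank ℤ (𝓞 k) := by
      calc 2 ≤ ℓ := hℓ.two_le
      _ = ℓ ^ 1 := (pow_one ℓ).symm
      _ ≤ ℓ ^ Module.finrank ℤ (𝓞 k) := Nat.pow_le_pow_right hℓ.pos hnpos
    omega
  obtain ⟨q, hqmax, hq⟩ := Ideal.exists_le_maximal _ hne
  refine ⟨⟨q, hqmax.isPrime⟩, hq (Ideal.subset_span rfl), ?_⟩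
  have hsurj := resMap_surjective ⟨q, hqmax.isPrime⟩ hqmax
  let e : ((𝓞 k) ⧸ q) ≃+* ResidueField (Localization.AtPrime q) :=
    (Ideal.quotEquivOfEq (ker_resMap ⟨q, hqmax.isPrime⟩).symm).trans
      (RingHom.quotientKerEquivOfSurjective hsurj)
  have hdvd : Ideal.absNorm q ∣ ℓ ^ Module.finrank ℤ (𝓞 k) :=
    habs ▸ Ideal.absNorm_dvd_absNorm_of_le hq
  have habsne : Ideal.absNorm q ≠ 0 := by
    intro h0
    rw [Ideal.absNorm_eq_zero_iff] at h0
    have h := h0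
    rw [h] at hq
    have h0' : (ℓ : 𝓞 k) = 0 := hq (Ideal.subset_span rfl)
    have h1 : (ℓ : 𝓞 k) ≠ 0 := by
      exact_mod_cast Nat.cast_ne_zero.mpr hℓ.ne_zero
    exact h1 h0'
  haveI hfinq : Finite ((𝓞 k) ⧸ q) := (Ideal.absNorm_ne_zero_iff q).mp habsne
  have hcardq : Nat.card ((𝓞 k) ⧸ q) = Ideal.absNorm q := by
    rw [Ideal.absNorm_apply, Submodule.cardQuot_apply]
  haveI hfin : Finite (ResidueField (Localization.AtPrime q)) := Finite.of_equiv _ e.toEquiv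
  have hcard : Nat.card (ResidueField (Localization.AtPrime q)) = Ideal.absNorm q := by
    rw [← hcardq]; exact (Nat.card_congr e.toEquiv).symm
  refine ⟨hfin, ?_, ?_⟩
  · have hl0 : (ℓ : ResidueField (Localization.AtPrime q)) = 0 := by
      have h2 : (resMap ⟨q, hqmax.isPrime⟩) (ℓ : 𝓞 k) = 0 := by
        rw [← RingHom.mem_ker, ker_resMap]
        exact hq (Ideal.subset_span rfl)
      rw [← map_natCast (resMap ⟨q, hqmax.isPrime⟩) ℓ]
      exact h2
    have hdvd' : ringChar (ResidueField (Localization.AtPrime q)) ∣ ℓ :=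
      ringChar.dvd hl0
    rcases (Nat.Prime.eq_one_or_self_of_dvd hℓ _ hdvd') with h1 | h
    · exfalso
      haveI hc1 : CharP (ResidueField (Localization.AtPrime q)) 1 := h1 ▸ ringChar.charP _
      have := CharP.cast_eq_zero (ResidueField (Localization.AtPrime q)) 1
      rw [Nat.cast_one] at this
      exact one_ne_zero this
    · exact h
  · rw [hcard]
    calc Ideal.absNorm q ≤ ℓ ^ Module.finrank ℤ (𝓞 k) :=
        Nat.le_of_dvd (pow_pos hℓ.pos _) hdvd
    _ ≤ ℓ ^ d := Nat.pow_le_pow_right hℓ.pos hnd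

end NumberFieldLevel

section SchemeLevel

open IsLocalRing

/-- `Spec` of a commutative ring, as a scheme. -/
abbrev specOf (R : Type) [CommRing R] : Scheme := Spec (CommRingCat.of R)

/-- The scheme-theoretic residue field of a point of `Spec A` is the residue field of the
localization at the corresponding prime. -/
def specResEquiv (A : CommRingCat) (x : PrimeSpectrum A) :
    (Spec A).residueField x ≃+* ResidueField (Localization.AtPrime x.asIdeal) :=
  (Scheme.Spec.residueFieldIso A x).commRingCatIsoToRingEquiv

/-- A quasi-compact scheme locally of finite type over `ℤ` admits a finite affine open cover by
spectra of finitely generated rings. -/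
lemma exists_cover (𝒮 : Scheme) [CompactSpace 𝒮]
    (hlft : LocallyOfFiniteType (specZIsTerminal.from 𝒮)) :
    ∃ (J : Type) (_ : Finite J) (A : J → CommRingCat) (c : ∀ j, Spec (A j) ⟶ 𝒮),
      (∀ j, IsOpenImmersion (c j)) ∧ (∀ s : 𝒮, ∃ j y, (c j).base y = s) ∧
      (∀ j, ∃ S : Finset (A j), Subring.closure (S : Set (A j)) = ⊤) := by
  let 𝒰 := 𝒮.affineCover.finiteSubcover
  refine ⟨𝒰.I₀, inferInstance, fun j => (𝒮.local_affine (𝒮.affineCover.idx j.1)).choose_spec.choose,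
    fun j => 𝒰.f j, fun j => 𝒰.map_prop j, ?_, ?_⟩
  · intro s
    exact ⟨𝒰.idx s, (𝒰.covers s).choose, (𝒰.covers s).choose_spec⟩
  · intro j
    set A := (𝒮.local_affine (𝒮.affineCover.idx j.1)).choose_spec.choose with hA
    have h1 : LocallyOfFiniteType (𝒰.f j ≫ specZIsTerminal.from 𝒮) := inferInstance
    have h2 : (𝒰.f j ≫ specZIsTerminal.from 𝒮) =
        Spec.map (CommRingCat.ofHom (Int.castRingHom A)) :=
      specZIsTerminal.hom_ext _ _
    rw [h2] at h1
    have h3 : RingHom.FiniteType (Int.castRingHom A) := HasRingHomProperty.Spec_iff.mp h1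
    obtain ⟨S, hS⟩ := h3.1
    have e : (Int.castRingHom ↑A).toAlgebra = Ring.toIntAlgebra ↑A := Subsingleton.elim _ _
    rw [e] at hS
    refine ⟨S, ?_⟩
    have h4 : Algebra.adjoin ℤ (S : Set A) = subalgebraOfSubring (Subring.closure (S : Set A)) :=
      Algebra.adjoin_int _
    rw [h4] at hS
    rw [Subring.eq_top_iff']
    intro x
    have : x ∈ subalgebraOfSubring (Subring.closure (S : Set A)) := hS ▸ trivial
    exact this

/-- The set of points of a quasi-compact scheme of finite type over `ℤ` whose residue fields are
finite of bounded cardinality and of prescribed characteristics is finite. -/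
lemma finite_points (𝒮 : Scheme) [CompactSpace 𝒮]
    (hlft : LocallyOfFiniteType (specZIsTerminal.from 𝒮))
    (N d : ℕ) (ℓ : Fin N → ℕ) (hℓ : ∀ t, (ℓ t).Prime) :
    {s : 𝒮 | Finite (𝒮.residueField s) ∧ ∃ t : Fin N,
      ringChar (𝒮.residueField s) = ℓ t ∧
      Nat.card (𝒮.residueField s) ≤ (ℓ t) ^ d}.Finite := by
  obtain ⟨J, hJ, A, c, hoi, hsurj, hgen⟩ := exists_cover 𝒮 hlft
  haveI := hJ
  choose S hS using hgen
  have hsub : {s : 𝒮 | Finite (𝒮.residueField s) ∧ ∃ t : Fin N,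
      ringChar (𝒮.residueField s) = ℓ t ∧
      Nat.card (𝒮.residueField s) ≤ (ℓ t) ^ d} ⊆
      ⋃ (j : J) (t : Fin N), (c j).base ''
        {p : PrimeSpectrum (A j) | Finite (ResidueField (Localization.AtPrime p.asIdeal)) ∧
          ringChar (ResidueField (Localization.AtPrime p.asIdeal)) = ℓ t ∧
          Nat.card (ResidueField (Localization.AtPrime p.asIdeal)) ≤ (ℓ t) ^ d} := by
    intro s hs
    obtain ⟨hfin, t, hchar, hcard⟩ := hs
    obtain ⟨j, y, hy⟩ := hsurj s
    subst hy
    haveI : IsOpenImmersion (c j) := hoi j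
    let e1 : (𝒮.residueField ((c j).base y)) ≃+* ((Spec (A j)).residueField y) :=
      (asIso ((c j).residueFieldMap y)).commRingCatIsoToRingEquiv
    haveI : y.asIdeal.IsPrime := y.isPrime
    let e : (𝒮.residueField ((c j).base y)) ≃+*
        ResidueField (Localization.AtPrime (y : PrimeSpectrum (A j)).asIdeal) :=
      e1.trans (specResEquiv (A j) y)
    refine Set.mem_iUnion.mpr ⟨j, Set.mem_iUnion.mpr ⟨t, ⟨y, ?_, rfl⟩⟩⟩
    obtain ⟨hf, hc, hcd⟩ := field_transfer e.symm.toRingHom hfin hchar hcard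
    exact ⟨hf, hc, hcd⟩
  refine Set.Finite.subset ?_ hsub
  refine Set.finite_iUnion (fun j => Set.finite_iUnion (fun t => ?_))
  exact Set.Finite.image _ (finite_small_primes (S j) (hS j) (ℓ t) d (hℓ t))

end SchemeLevel

set_option maxHeartbeats 1600000 in
set_option synthInstance.maxHeartbeats 400000 in
theorem exists_test_points
    -- `𝒮` : a separated scheme of finite type over `ℤ`
    (𝒮 : Scheme)
    (hsep : IsSeparated (specZIsTerminal.from 𝒮))
    (hlft : LocallyOfFiniteType (specZIsTerminal.from 𝒮))
    (hqc : QuasiCompact (specZIsTerminal.from 𝒮))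
    -- the integers `n, d, r > 0`
    (n d r : ℕ) (hn : 0 < n) (hd : 0 < d) (hr : 0 < r) :
    ∃ (m : ℕ) (s : Fin m → 𝒮),
      -- (1) finite residue fields of characteristic prime to `n`
      (∀ i : Fin m,
        Finite (𝒮.residueField (s i)) ∧ (ringChar (𝒮.residueField (s i))).Coprime n) ∧
      -- (2) for every `U`-point of `𝒮` with `U` of bounded ramification data
      (∀ (k : Type) (_ : Field k) (_ : NumberField k),
        Module.finrank ℚ k ≤ d →
        ∀ U : (specOf (NumberField.RingOfIntegers k)).Opens,
          -- `U` has at most `r` places at infinity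
          {p : specOf (NumberField.RingOfIntegers k) | p ∉ U}.Finite →
          Nat.card {p : specOf (NumberField.RingOfIntegers k) // p ∉ U} ≤ r →
          ∀ u : U.toScheme ⟶ 𝒮,
            ∃ i j : Fin m, i < j ∧
              ringChar (𝒮.residueField (s i)) ≠ ringChar (𝒮.residueField (s j)) ∧
              (∃ x : U.toScheme, u.base x = s i) ∧
              (∃ y : U.toScheme, u.base y = s j)) := by
  classical
  -- `𝒮` is quasi-compact
  haveI : CompactSpace 𝒮 := by
    constructor
    have := hqc.1 Set.univ isOpen_univ isCompact_univ
    simpa using this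
  -- choose `r + 2` distinct primes, all `> n`
  have hinf : ({p | Nat.Prime p} \ {p | p ≤ n}).Infinite :=
    Nat.infinite_setOf_prime.diff (Set.finite_le_nat n)
  let emb := hinf.natEmbedding
  let ℓ : Fin (r + 2) → ℕ := fun t => (emb (t : ℕ)).1
  have hprime : ∀ t, (ℓ t).Prime := fun t => (emb (t : ℕ)).2.1
  have hgt : ∀ t, n < ℓ t := fun t => not_le.mp (emb (t : ℕ)).2.2
  have hℓinj : Function.Injective ℓ := by
    intro t t' h
    have := emb.injective (Subtype.ext h)
    exact Fin.val_injective this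
  -- the finite set of test points
  set S : Set 𝒮 := {s : 𝒮 | Finite (𝒮.residueField s) ∧ ∃ t : Fin (r + 2),
      ringChar (𝒮.residueField s) = ℓ t ∧
      Nat.card (𝒮.residueField s) ≤ (ℓ t) ^ d} with hSdef
  have hSfin : S.Finite := finite_points 𝒮 hlft (r + 2) d ℓ hprime
  haveI : Finite ↥S := hSfin.to_subtype
  obtain ⟨m, ⟨eS⟩⟩ := Finite.exists_equiv_fin ↥S
  refine ⟨m, fun i => ((eS.symm i : ↥S) : 𝒮), ?_, ?_⟩
  · -- condition (1)
    intro i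
    obtain ⟨hfin, t, hchar, -⟩ := (eS.symm i).2
    refine ⟨hfin, ?_⟩
    rw [hchar]
    exact (Nat.Prime.coprime_iff_not_dvd (hprime t)).mpr
      (fun hdvd => absurd (Nat.le_of_dvd hn hdvd) (not_le.mpr (hgt t)))
  · -- condition (2)
    intro k _ _ hdeg U hUfin hUcard u
    -- choose a prime of `O_k` above each `ℓ t`
    have H := fun t : Fin (r + 2) => exists_prime_over k hdeg (hprime t)
    choose p hmem hfin hchar hcard using H
    -- at most `r` of them can avoid `U`
    set Bad : Set (Fin (r + 2)) := {t | (p t : specOf (NumberField.RingOfIntegers k)) ∉ U}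
      with hBad
    have hBadcard : Bad.ncard ≤ r := by
      haveI : Finite {q : specOf (NumberField.RingOfIntegers k) // q ∉ U} := hUfin.to_subtype
      have hinj : Function.Injective
          (fun t : ↥Bad => (⟨p t.1, t.2⟩ :
            {q : specOf (NumberField.RingOfIntegers k) // q ∉ U})) := by
        intro t1 t2 h
        have heq : p t1.1 = p t2.1 := congrArg Subtype.val h
        by_contra hne
        have hne' : t1.1 ≠ t2.1 := fun h' => hne (Subtype.ext h')
        have hℓne : ℓ t1.1 ≠ ℓ t2.1 := fun h' => hne' (hℓinj h')
        have hco : Nat.gcd (ℓ t1.1) (ℓ t2.1) = 1 :=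
          Nat.Coprime.gcd_eq_one ((Nat.coprime_primes (hprime _) (hprime _)).mpr hℓne)
        have hb := Nat.gcd_eq_gcd_ab (ℓ t1.1) (ℓ t2.1)
        rw [hco] at hb
        have hmem2 : ((ℓ t2.1 : ℕ) : NumberField.RingOfIntegers k) ∈ (p t1.1).asIdeal := by
          rw [heq]; exact hmem t2.1
        have h1 : (1 : NumberField.RingOfIntegers k) ∈ (p t1.1).asIdeal := by
          have hc := congrArg (fun z : ℤ => (z : NumberField.RingOfIntegers k)) hb
          push_cast at hc
          rw [hc]
          exact Ideal.add_mem _ (Ideal.mul_mem_right _ _ (hmem t1.1))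
            (Ideal.mul_mem_right _ _ hmem2)
        exact (p t1.1).isPrime.ne_top ((Ideal.eq_top_iff_one _).mpr h1)
      calc Bad.ncard = Nat.card ↥Bad := (Nat.card_coe_set_eq Bad).symm
        _ ≤ Nat.card {q : specOf (NumberField.RingOfIntegers k) // q ∉ U} :=
            Nat.card_le_card_of_injective _ hinj
        _ ≤ r := hUcard
    -- hence at least two good indices with distinct primes
    have hcompl : Bad.ncard + Badᶜ.ncard = r + 2 := by
      rw [Set.ncard_add_ncard_compl]
      simp
    have h2good : 1 < Badᶜ.ncard := by omega
    obtain ⟨a, b, ha, hb, hab⟩ := (Set.one_lt_ncard_iff (Set.toFinite _)).mp h2good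
    have haU : (p a : specOf (NumberField.RingOfIntegers k)) ∈ U := not_not.mp ha
    have hbU : (p b : specOf (NumberField.RingOfIntegers k)) ∈ U := not_not.mp hb
    -- the corresponding points of `U`
    let xa : U.toScheme := ⟨p a, haU⟩
    let xb : U.toScheme := ⟨p b, hbU⟩
    -- the images in `𝒮` lie in `S`
    have key : ∀ (t : Fin (r + 2)) (htU : (p t : specOf (NumberField.RingOfIntegers k)) ∈ U),
        Finite (𝒮.residueField (u.base ⟨p t, htU⟩)) ∧
        ringChar (𝒮.residueField (u.base ⟨p t, htU⟩)) = ℓ t ∧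
        Nat.card (𝒮.residueField (u.base ⟨p t, htU⟩)) ≤ (ℓ t) ^ d := by
      intro t htU
      let x : U.toScheme := ⟨p t, htU⟩
      let e2 : (specOf (NumberField.RingOfIntegers k)).residueField (U.ι.base x) ≃+*
          U.toScheme.residueField x :=
        (asIso (U.ι.residueFieldMap x)).commRingCatIsoToRingEquiv
      let e3 : (specOf (NumberField.RingOfIntegers k)).residueField (U.ι.base x) ≃+*
          IsLocalRing.ResidueField (Localization.AtPrime (p t).asIdeal) :=
        specResEquiv (CommRingCat.of (NumberField.RingOfIntegers k)) (p t)
      let f : 𝒮.residueField (u.base x) →+*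
          IsLocalRing.ResidueField (Localization.AtPrime (p t).asIdeal) :=
        (e3.toRingHom.comp e2.symm.toRingHom).comp (u.residueFieldMap x).hom
      exact field_transfer f (hfin t) (hchar t) (hcard t)
    obtain ⟨hfa, hca, hda⟩ := key a haU
    obtain ⟨hfb, hcb, hdb⟩ := key b hbU
    have hmemA : u.base xa ∈ S := ⟨hfa, a, hca, hda⟩
    have hmemB : u.base xb ∈ S := ⟨hfb, b, hcb, hdb⟩
    -- the two images have distinct residue characteristics
    have hℓab : ℓ a ≠ ℓ b := fun h => hab (hℓinj h)
    have hneq : u.base xa ≠ u.base xb := by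
      intro h
      rw [h] at hca
      exact hℓab (hca ▸ hcb ▸ rfl)
    -- turn them into indices
    set ia := eS ⟨u.base xa, hmemA⟩ with hia
    set ib := eS ⟨u.base xb, hmemB⟩ with hib
    have hsa : ((eS.symm ia : ↥S) : 𝒮) = u.base xa := by rw [hia, Equiv.symm_apply_apply]
    have hsb : ((eS.symm ib : ↥S) : 𝒮) = u.base xb := by rw [hib, Equiv.symm_apply_apply]
    have hija : ia ≠ ib := by
      intro h
      apply hneq
      rw [← hsa, ← hsb, h]
    have hchars : ringChar (𝒮.residueField ((eS.symm ia : ↥S) : 𝒮)) ≠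
        ringChar (𝒮.residueField ((eS.symm ib : ↥S) : 𝒮)) := by
      rw [hsa, hsb]  -- may fail due to motive; try simp only
      rw [hca, hcb]
      exact hℓab
    rcases lt_or_gt_of_ne hija with hlt | hgt'
    · exact ⟨ia, ib, hlt, hchars, ⟨xa, hsa.symm ▸ rfl⟩, ⟨xb, hsb.symm ▸ rfl⟩⟩
    · exact ⟨ib, ia, hgt', hchars.symm, ⟨xb, hsb.symm ▸ rfl⟩, ⟨xa, hsa.symm ▸ rfl⟩⟩
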